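/- Let 0 < a < b. Then 0 ≤ A(a,b) − L(a,b) ≤ ((b−a)/(2a))·L(a,b). -/

import Mathlib

lemma key_ineq {t : ℝ} (ht : 1 ≤ t) : 2 * (t - 1) ≤ (t + 1) * Real.log t := by
  set f : ℝ → ℝ := fun x => (x + 1) * Real.log x - 2 * (x - 1) with hf
  have hd : ∀ x : ℝ, 0 < x → HasDerivAt f (Real.log x + 1 / x - 1) x := by
    intro x hx0
    have h1 : HasDerivAt (fun x : ℝ => (x + 1) * Real.log x)
        (1 * Real.log x + (x + 1) * x⁻¹) x :=
      ((hasDerivAt_id x).add_const 1).mul (Real.hasDerivAt_log hx0.ne')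
    have h2 : HasDerivAt (fun x : ℝ => 2 * (x - 1)) 2 x := by
      simpa using ((hasDerivAt_id x).sub_const 1).const_mul 2
    have := h1.sub h2
    refine this.congr_deriv ?_
    rw [add_mul, mul_inv_cancel₀ hx0.ne']
    ring
  have hmono : MonotoneOn f (Set.Ici 1) := by
    apply monotoneOn_of_deriv_nonneg (convex_Ici 1)
    · apply ContinuousOn.sub
      · exact ContinuousOn.mul (by fun_prop) (Real.continuousOn_log.mono (by
          intro x hx; simp at hx ⊢; linarith))
      · fun_prop
    · intro x hx
      rw [interior_Ici] at hx
      exact ((hd x (lt_trans one_pos hx)).differentiableAt).differentiableWithinAt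
    · intro x hx
      rw [interior_Ici] at hx
      have hx0 : (0:ℝ) < x := lt_trans one_pos hx
      rw [(hd x hx0).deriv]
      have hlog : 1 - 1/x ≤ Real.log x := by
        have := Real.log_le_sub_one_of_pos (x := 1/x) (by positivity)
        rw [Real.log_div one_ne_zero hx0.ne', Real.log_one] at this
        linarith
      linarith
  have := hmono (Set.self_mem_Ici) (Set.mem_Ici.mpr ht) ht
  simp only [hf, Real.log_one] at this
  linarith

theorem arith_log_mean_inequality (a b : ℝ) (ha : 0 < a) (hab : a < b) :
    0 ≤ (a + b) / 2 - (b - a) / (Real.log b - Real.log a) ∧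
      (a + b) / 2 - (b - a) / (Real.log b - Real.log a) ≤
        (b - a) / (2 * a) * ((b - a) / (Real.log b - Real.log a)) := by
  have hb : 0 < b := ha.trans hab
  have ht : 1 < b / a := (one_lt_div ha).mpr hab
  have hlog : Real.log b - Real.log a = Real.log (b / a) := by
    rw [Real.log_div hb.ne' ha.ne']
  have hℓ : 0 < Real.log b - Real.log a := by
    rw [hlog]; exact Real.log_pos ht
  set ℓ := Real.log b - Real.log a with hℓdef
  have key := key_ineq ht.le
  rw [← hlog] at key
  have k2 : 2 * (b - a) ≤ (a + b) * ℓ := by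
    have h := mul_le_mul_of_nonneg_left key ha.le
    have e1 : a * (2 * (b / a - 1)) = 2 * (b - a) := by field_simp
    have e2 : a * ((b / a + 1) * ℓ) = (a + b) * ℓ := by
      rw [show b / a + 1 = (a + b) / a by field_simp; ring]
      field_simp
    calc 2 * (b - a) = a * (2 * (b / a - 1)) := e1.symm
      _ ≤ a * ((b / a + 1) * ℓ) := h
      _ = (a + b) * ℓ := e2
  have hla : a * ℓ ≤ b - a := by
    have h := Real.log_le_sub_one_of_pos (div_pos hb ha)
    rw [← hlog] at h
    have := mul_le_mul_of_nonneg_left h ha.le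
    have e : a * (b / a - 1) = b - a := by field_simp
    exact le_of_le_of_eq this e
  constructor
  · rw [sub_nonneg, div_le_div_iff₀ hℓ two_pos]
    linarith
  · have hpos : (0:ℝ) < 2 * a * ℓ := by positivity
    have h : ((a + b) / 2 - (b - a) / ℓ) * (2 * a * ℓ) ≤
        ((b - a) / (2 * a) * ((b - a) / ℓ)) * (2 * a * ℓ) := by
      have e1 : ((a + b) / 2 - (b - a) / ℓ) * (2 * a * ℓ)
          = a * ℓ * (a + b) - 2 * a * (b - a) := by field_simp
      have e2 : ((b - a) / (2 * a) * ((b - a) / ℓ)) * (2 * a * ℓ) = (b - a) ^ 2 := by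
        field_simp
      rw [e1, e2]
      nlinarith [hla]
    exact le_of_mul_le_mul_right h hpos
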